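/- Let C be an (M,N,d,w) constant-weight binary code with average distance D, let t be a positive integer with t ≤ N−1, and assume d < D and w − t(w − D/2) > 0. Then the number of pairs (c, S), where c ∈ C and S is a t-element subset of C\{c}, satisfying ∑_{x∈S} (w − d_H(c,x)/2) ≥ w, is at most N·C(N−1,t)·exp(−3(w − t(w − D/2))² / ((2t(w − D/2) + w)·(D − d))). -/

import Mathlib

open Finset Real

section AuxLemmas

private lemma amgm_pow' (p q : ℝ) (n : ℕ) (hp : 0 ≤ p) (hq : 0 ≤ q) :
    ((n : ℝ) + 1) * p * q ^ n ≤ p ^ (n + 1) + n * q ^ (n + 1) := by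
  rcases eq_or_lt_of_le hq with h | h
  · rcases Nat.eq_zero_or_pos n with hn | hn
    · subst hn; simp
    · rw [← h, zero_pow (by omega), zero_pow (by omega)]
      simpa using pow_nonneg hp (n+1)
  · have key := one_add_mul_le_pow (a := p / q - 1) (by nlinarith [div_nonneg hp h.le]) (n + 1)
    push_cast at key
    rw [show (1 : ℝ) + (p / q - 1) = p / q by ring, div_pow] at key
    have hqn : (0:ℝ) < q ^ (n+1) := pow_pos h _
    have key2 := mul_le_mul_of_nonneg_right key hqn.le
    rw [div_mul_cancel₀ _ hqn.ne'] at key2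
    have expand : (1 + ((n:ℝ)+1)*(p/q - 1))*q^(n+1) =
        q^(n+1) + ((n:ℝ)+1)*p*q^n - ((n:ℝ)+1)*q^(n+1) := by
      field_simp
      ring
    rw [expand] at key2
    linarith

private lemma alg_step' (m n : ℕ) (p q u : ℝ) (hp : 0 ≤ p) (hq : 0 ≤ q) (hu : 0 ≤ u)
    (hrel : (m : ℝ) * q + u = ((m : ℝ) + 1) * p) :
    (m.choose (n+1) : ℝ) * q ^ (n+1) + u * (m.choose n : ℝ) * q ^ n
      ≤ ((m+1).choose (n+1) : ℝ) * p ^ (n+1) := by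
  rcases lt_or_ge m n with hmn | hmn
  · rw [Nat.choose_eq_zero_of_lt (by omega), Nat.choose_eq_zero_of_lt (by omega),
      Nat.choose_eq_zero_of_lt (by omega)]
    simp
  · have hid0 : (m.choose (n+1) : ℝ) * ((n:ℝ)+1) = (m.choose n : ℝ) * ((m:ℝ) - n) := by
      have h := Nat.choose_succ_right_eq m n
      have h2 : ((m.choose (n+1) : ℕ) : ℝ) * (((n+1 : ℕ)) : ℝ)
          = ((m.choose n : ℕ) : ℝ) * (((m - n : ℕ)) : ℝ) := by exact_mod_cast h
      rw [Nat.cast_sub hmn] at h2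
      push_cast at h2 ⊢
      linarith
    set A : ℝ := (m.choose (n+1) : ℝ) with hA
    set B : ℝ := (m.choose n : ℝ) with hB
    have hid : A * ((n:ℝ)+1) = B * ((m:ℝ) - n) := hid0
    have hsucc : ((m+1).choose (n+1) : ℝ) = B + A := by
      rw [Nat.choose_succ_succ]; push_cast; ring
    have hBnn : (0:ℝ) ≤ B := Nat.cast_nonneg _
    have key3 := mul_le_mul_of_nonneg_left (amgm_pow' p q n hp hq)
      (mul_nonneg (by positivity : (0:ℝ) ≤ ((m:ℝ)+1)) hBnn)
    have hu' : u = ((m:ℝ)+1)*p - (m:ℝ)*q := by linarith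
    rw [hsucc]
    have hn1 : (0:ℝ) < (n:ℝ)+1 := by positivity
    rw [← mul_le_mul_iff_of_pos_left hn1]
    have eq1 : ((n:ℝ)+1) * (A * q ^ (n+1) + u * B * q ^ n)
        = ((m:ℝ)+1)*B*(((n:ℝ)+1)*p*q^n) - ((m:ℝ)+1)*B*(n:ℝ)*q^(n+1) := by
      linear_combination q^(n+1)*hid + (((n:ℝ)+1)*B*q^n)*hu'
    have eq2 : ((n:ℝ)+1) * ((B + A) * p ^ (n+1))
        = ((m:ℝ)+1)*B*(p^(n+1) + (n:ℝ)*q^(n+1)) - ((m:ℝ)+1)*B*(n:ℝ)*q^(n+1) := by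
      linear_combination p^(n+1)*hid
    rw [eq1, eq2]
    linarith [key3]

private lemma maclaurin' {α : Type*} [DecidableEq α] (T : Finset α) (f : α → ℝ)
    (hf : ∀ x ∈ T, 0 ≤ f x) (t : ℕ) :
    ∑ S ∈ T.powersetCard t, ∏ x ∈ S, f x
      ≤ (T.card.choose t : ℝ) * ((∑ x ∈ T, f x) / T.card) ^ t := by
  induction T using Finset.cons_induction generalizing t with
  | empty =>
    rcases Nat.eq_zero_or_pos t with ht | ht
    · subst ht; simp
    · rw [show (∅ : Finset α).powersetCard t = ∅ by
        rw [powersetCard_eq_empty]; simpa using ht]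
      simp [Nat.choose_eq_zero_of_lt (by simpa using ht)]
  | cons a T ha IH =>
    have hfa : 0 ≤ f a := hf a (mem_cons_self a T)
    have hfT : ∀ x ∈ T, 0 ≤ f x := fun x hx => hf x (mem_cons_of_mem hx)
    have hsum_nonneg : 0 ≤ ∑ x ∈ T, f x := Finset.sum_nonneg hfT
    rcases Nat.eq_zero_or_pos t with ht | ht
    · subst ht; simp
    · obtain ⟨n, rfl⟩ : ∃ n, t = n + 1 := ⟨t - 1, by omega⟩
      rw [Finset.cons_eq_insert, Finset.powersetCard_succ_insert ha]
      have hdisj : Disjoint (T.powersetCard (n+1)) ((T.powersetCard n).image (insert a)) := by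
        rw [Finset.disjoint_left]
        intro S hS hS'
        rw [mem_powersetCard] at hS
        obtain ⟨S', hS', rfl⟩ := Finset.mem_image.mp hS'
        exact ha (hS.1 (mem_insert_self a S'))
      rw [Finset.sum_union hdisj]
      have himg : ∑ S ∈ (T.powersetCard n).image (insert a), ∏ x ∈ S, f x
          = f a * ∑ S ∈ T.powersetCard n, ∏ x ∈ S, f x := by
        rw [Finset.sum_image, Finset.mul_sum]
        · apply Finset.sum_congr rfl
          intro S hS
          rw [mem_powersetCard] at hS
          have haS : a ∉ S := fun h => ha (hS.1 h)
          rw [Finset.prod_insert haS]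
        · intro S hS S' hS' hins
          rw [Finset.mem_coe, mem_powersetCard] at hS hS'
          have h1 : a ∉ S := fun h => ha (hS.1 h)
          have h2 : a ∉ S' := fun h => ha (hS'.1 h)
          rw [← Finset.erase_insert h1, ← Finset.erase_insert h2, hins]
      rw [himg]
      set m := T.card with hm
      set q : ℝ := (∑ x ∈ T, f x) / m with hqdef
      have hq : 0 ≤ q := by positivity
      set p : ℝ := (∑ x ∈ insert a T, f x) / (insert a T).card with hpdef
      have hcard : (insert a T).card = m + 1 := by
        rw [Finset.card_insert_of_notMem ha]
      have hsump : ∑ x ∈ insert a T, f x = f a + ∑ x ∈ T, f x := by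
        rw [Finset.sum_insert ha]
      have hp : 0 ≤ p := by
        rw [hpdef, hsump]; positivity
      have hTsum : (m : ℝ) * q = ∑ x ∈ T, f x := by
        rcases Nat.eq_zero_or_pos m with h0 | h0
        · have hT : T = ∅ := Finset.card_eq_zero.mp (by omega)
          rw [hqdef]
          simp [hT, h0]
        · have hm0 : (m:ℝ) ≠ 0 := by
            exact (Nat.cast_pos (α := ℝ)).mpr h0 |>.ne'
          rw [hqdef]
          field_simp
      have hrel : (m : ℝ) * q + f a = ((m : ℝ) + 1) * p := by
        rw [hpdef, hcard, hsump]
        have hm1 : ((m:ℝ) + 1) ≠ 0 := by positivity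
        push_cast
        field_simp
        linarith [hTsum]
      calc (∑ S ∈ T.powersetCard (n+1), ∏ x ∈ S, f x)
            + f a * ∑ S ∈ T.powersetCard n, ∏ x ∈ S, f x
          ≤ (m.choose (n+1) : ℝ) * q ^ (n+1) + f a * ((m.choose n : ℝ) * q ^ n) := by
            have h1 := IH hfT (n+1)
            have h2 := IH hfT n
            have h3 := mul_le_mul_of_nonneg_left h2 hfa
            exact add_le_add h1 h3
        _ ≤ ((m+1).choose (n+1) : ℝ) * p ^ (n+1) := by
            have := alg_step' m n p q (f a) hp hq hfa hrel
            linarith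
        _ = ((insert a T).card.choose (n+1) : ℝ) * p ^ (n+1) := by rw [hcard]

noncomputable def Hfun : ℝ → ℝ :=
  fun v => (2*v*(2 - 2*v/3) - v^2*(-2/3))/(2 - 2*v/3)^2 + (1 - Real.exp v)

noncomputable def Gfun : ℝ → ℝ :=
  fun v => v^2/(2 - 2*v/3) + (v + 1 - Real.exp v)

private lemma Hfun_hasDeriv (x : ℝ) (hx : x < 3) :
    HasDerivAt Hfun (((1 - x/3)^3)⁻¹ - Real.exp x) x := by
  have hne : (2 - 2*x/3) ≠ 0 := by intro h; nlinarith
  have hne2 : ((2 - 2*x/3)^2) ≠ 0 := pow_ne_zero 2 hne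
  have hid := hasDerivAt_id x
  have h2v := hid.const_mul (2:ℝ)
  have hden := (hasDerivAt_const x (2:ℝ)).sub ((hid.const_mul (2:ℝ)).div_const 3)
  have hnum := (h2v.mul hden).sub ((hasDerivAt_pow 2 x).mul_const (-2/3 : ℝ))
  have hden2 := hden.pow 2
  have hquot := hnum.div hden2 hne2
  have h1 : (1 - x/3) ≠ 0 := by intro h; nlinarith
  have hcube : ((1 - x/3)^3) ≠ 0 := pow_ne_zero 3 h1
  have hne4 : (((2 - 2*x/3)^2)^2) ≠ 0 := pow_ne_zero 2 hne2
  have hquot' : HasDerivAt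
      (fun y : ℝ => (2*y*(2 - 2*y/3) - y^2*(-2/3))/(2 - 2*y/3)^2) (((1 - x/3)^3)⁻¹) x := by
    refine hquot.congr_deriv ?_
    symm
    simp only [Pi.sub_apply, Pi.mul_apply, Pi.pow_apply, id_eq]
    rw [eq_div_iff hne4, inv_mul_eq_div, div_eq_iff hcube]
    ring
  have hexp := Real.hasDerivAt_exp x
  have hH := hquot'.add ((hasDerivAt_const x (1:ℝ)).sub hexp)
  have heq : HasDerivAt Hfun _ x := hH
  convert heq using 1
  ring

private lemma exp_le_inv_cube (v : ℝ) (h3 : v < 3) : Real.exp v ≤ ((1 - v/3)^3)⁻¹ := by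
  have h1 : 0 < 1 - v/3 := by linarith
  have h2 : (1 - v/3) ≤ Real.exp (-(v/3)) := by
    have := Real.add_one_le_exp (-(v/3)); linarith
  have h4 : (1 - v/3)^3 ≤ (Real.exp (-(v/3)))^3 := by
    apply pow_le_pow_left₀ h1.le h2
  have h5 : (Real.exp (-(v/3)))^3 = Real.exp (-v) := by
    rw [← Real.exp_nat_mul]; ring_nf
  rw [h5] at h4
  have h6 : Real.exp v * (1 - v/3)^3 ≤ 1 := by
    calc Real.exp v * (1 - v/3)^3 ≤ Real.exp v * Real.exp (-v) := by
          apply mul_le_mul_of_nonneg_left h4 (Real.exp_pos v).le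
      _ = 1 := by rw [← Real.exp_add]; simp
  have h7 : (0:ℝ) < (1 - v/3)^3 := by positivity
  calc Real.exp v = Real.exp v * (1 - v/3)^3 / (1 - v/3)^3 := by
        rw [mul_div_assoc, div_self h7.ne', mul_one]
    _ ≤ 1 / (1 - v/3)^3 := (div_le_div_iff_of_pos_right h7).mpr h6
    _ = ((1 - v/3)^3)⁻¹ := one_div _

private lemma Hfun_nonneg (v : ℝ) (h0 : 0 ≤ v) (h3 : v < 3) : 0 ≤ Hfun v := by
  have hmono : MonotoneOn Hfun (Set.Ico (0:ℝ) 3) := by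
    apply monotoneOn_of_deriv_nonneg (convex_Ico 0 3)
    · intro x hx
      exact (Hfun_hasDeriv x hx.2).differentiableAt.continuousAt.continuousWithinAt
    · rw [interior_Ico]
      intro x hx
      exact (Hfun_hasDeriv x hx.2).differentiableAt.differentiableWithinAt
    · rw [interior_Ico]
      intro x hx
      rw [(Hfun_hasDeriv x hx.2).deriv]
      have := exp_le_inv_cube x hx.2
      linarith
  have h00 : Hfun 0 = 0 := by norm_num [Hfun]
  have := hmono (Set.mem_Ico.mpr ⟨le_refl 0, by norm_num⟩) (Set.mem_Ico.mpr ⟨h0, h3⟩) h0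
  linarith

private lemma Gfun_hasDeriv (x : ℝ) (hx : x < 3) : HasDerivAt Gfun (Hfun x) x := by
  have hne : (2 - 2*x/3) ≠ 0 := by intro h; nlinarith
  have hid := hasDerivAt_id x
  have hden := (hasDerivAt_const x (2:ℝ)).sub ((hid.const_mul (2:ℝ)).div_const 3)
  have hexp := Real.hasDerivAt_exp x
  have hq := (hasDerivAt_pow 2 x).div hden hne
  have hG := hq.add ((hid.add_const (1:ℝ)).sub hexp)
  have heq : HasDerivAt Gfun _ x := hG
  convert heq using 1
  simp only [Hfun, id_eq]
  have hnum : (2*x*(2 - 2*x/3) - x^2*(-2/3))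
      = ((2:ℕ):ℝ) * x ^ (2-1) * (2 - 2 * x/3) - x^2 * (0 - 2*1/3) := by
    push_cast; ring
  rw [hnum]
  rfl

private lemma bern_num (v : ℝ) (h0 : 0 ≤ v) (h3 : v < 3) :
    Real.exp v - v - 1 ≤ v^2/(2*(1 - v/3)) := by
  have hmono : MonotoneOn Gfun (Set.Ico (0:ℝ) 3) := by
    apply monotoneOn_of_deriv_nonneg (convex_Ico 0 3)
    · intro x hx
      exact (Gfun_hasDeriv x hx.2).differentiableAt.continuousAt.continuousWithinAt
    · rw [interior_Ico]
      intro x hx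
      exact (Gfun_hasDeriv x hx.2).differentiableAt.differentiableWithinAt
    · rw [interior_Ico]
      intro x hx
      rw [(Gfun_hasDeriv x hx.2).deriv]
      exact Hfun_nonneg x hx.1.le hx.2
  have h00 : Gfun 0 = 0 := by norm_num [Gfun]
  have hge := hmono (Set.mem_Ico.mpr ⟨le_refl 0, by norm_num⟩) (Set.mem_Ico.mpr ⟨h0, h3⟩) h0
  rw [h00] at hge
  have : Gfun v = v^2/(2 - 2*v/3) + (v + 1 - Real.exp v) := rfl
  rw [this] at hge
  have h2 : 2*(1 - v/3) = 2 - 2*v/3 := by ring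
  rw [h2]
  linarith

noncomputable def Ffun (mu cc : ℝ) : ℝ → ℝ :=
  fun x => Real.exp (x*mu + mu/cc*(Real.exp (x*cc) - x*cc - 1))
    - mu*(Real.exp (x*(mu+cc)) - 1)/(mu+cc)

private lemma Ffun_hasDeriv (mu cc : ℝ) (hmu : 0 < mu) (hc : 0 < cc) (x : ℝ) :
    HasDerivAt (Ffun mu cc)
      (mu*Real.exp (x*cc) * Real.exp (x*mu + mu/cc*(Real.exp (x*cc) - x*cc - 1))
        - mu*Real.exp (x*(mu+cc))) x := by
  have hb : (mu + cc) ≠ 0 := by positivity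
  have hid := hasDerivAt_id x
  have hxc : HasDerivAt (fun y : ℝ => y * cc) cc x := by
    simpa using hid.mul_const cc
  have hexc : HasDerivAt (fun y : ℝ => Real.exp (y*cc)) (Real.exp (x*cc) * cc) x := hxc.exp
  have hg : HasDerivAt (fun y : ℝ => y*mu + mu/cc*(Real.exp (y*cc) - y*cc - 1))
      (mu + mu/cc*(Real.exp (x*cc)*cc - cc)) x := by
    have h1 : HasDerivAt (fun y : ℝ => y * mu) mu x := by simpa using hid.mul_const mu
    have h2 : HasDerivAt (fun y : ℝ => Real.exp (y*cc) - y*cc - 1)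
        (Real.exp (x*cc)*cc - cc) x := by
      simpa using (hexc.sub hxc).sub_const 1
    exact h1.add (h2.const_mul (mu/cc))
  have hE : HasDerivAt (fun y : ℝ => Real.exp (y*mu + mu/cc*(Real.exp (y*cc) - y*cc - 1)))
      (Real.exp (x*mu + mu/cc*(Real.exp (x*cc) - x*cc - 1)) * (mu + mu/cc*(Real.exp (x*cc)*cc - cc))) x :=
    hg.exp
  have hxb : HasDerivAt (fun y : ℝ => y * (mu+cc)) (mu+cc) x := by
    simpa using hid.mul_const (mu+cc)
  have hsec : HasDerivAt (fun y : ℝ => mu*(Real.exp (y*(mu+cc)) - 1)/(mu+cc))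
      (mu*(Real.exp (x*(mu+cc))*(mu+cc))/(mu+cc)) x := by
    have := ((hxb.exp.sub_const 1).const_mul mu).div_const (mu+cc)
    simpa using this
  have hF : HasDerivAt (Ffun mu cc) _ x := hE.sub hsec
  convert hF using 1
  field_simp
  ring

private lemma mgf_key (mu cc lam : ℝ) (hmu : 0 < mu) (hc : 0 < cc) (hlam : 0 ≤ lam) :
    1 + mu*(Real.exp (lam*(mu+cc)) - 1)/(mu+cc)
      ≤ Real.exp (lam*mu + mu/cc*(Real.exp (lam*cc) - lam*cc - 1)) := by
  have hmono : MonotoneOn (Ffun mu cc) (Set.Ici (0:ℝ)) := by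
    apply monotoneOn_of_deriv_nonneg (convex_Ici 0)
    · intro x _
      exact (Ffun_hasDeriv mu cc hmu hc x).differentiableAt.continuousAt.continuousWithinAt
    · intro x _
      exact (Ffun_hasDeriv mu cc hmu hc x).differentiableAt.differentiableWithinAt
    · rw [interior_Ici]
      intro x hx
      rw [(Ffun_hasDeriv mu cc hmu hc x).deriv]
      have hge : Real.exp (x*mu + mu/cc*(Real.exp (x*cc) - x*cc - 1)) ≥ Real.exp (x*mu) := by
        apply Real.exp_le_exp.mpr
        have h1 : 0 ≤ Real.exp (x*cc) - x*cc - 1 := by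
          have := Real.add_one_le_exp (x*cc); linarith
        nlinarith [div_pos hmu hc]
      have h2 : Real.exp (x*cc) * Real.exp (x*mu) = Real.exp (x*(mu+cc)) := by
        rw [← Real.exp_add]; ring_nf
      nlinarith [Real.exp_pos (x*cc), Real.exp_pos (x*mu),
        mul_le_mul_of_nonneg_left hge (Real.exp_pos (x*cc)).le]
  have h0 : Ffun mu cc 0 = 1 := by
    simp [Ffun]
  have := hmono (Set.mem_Ici.mpr (le_refl 0)) (Set.mem_Ici.mpr hlam) hlam
  rw [h0] at this
  have hF : Ffun mu cc lam = Real.exp (lam*mu + mu/cc*(Real.exp (lam*cc) - lam*cc - 1))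
      - mu*(Real.exp (lam*(mu+cc)) - 1)/(mu+cc) := rfl
  rw [hF] at this
  linarith

private lemma chord_exp (z bb lam : ℝ) (hz : 0 ≤ z) (hzb : z ≤ bb) (hbb : 0 < bb) (hlam : 0 ≤ lam) :
    Real.exp (lam * z) ≤ 1 + z * (Real.exp (lam * bb) - 1) / bb := by
  have key := convexOn_exp.2 (Set.mem_univ (0:ℝ)) (Set.mem_univ (lam*bb))
    (show (0:ℝ) ≤ 1 - z/bb by
      have : z/bb ≤ 1 := (div_le_one hbb).mpr hzb
      linarith)
    (show (0:ℝ) ≤ z/bb by positivity)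
    (show (1 - z/bb) + (z/bb) = 1 by ring)
  simp only [smul_eq_mul, mul_zero, zero_add, Real.exp_zero, mul_one] at key
  have h1 : (z/bb) * (lam * bb) = lam * z := by field_simp
  rw [h1] at key
  calc Real.exp (lam*z) ≤ (1 - z/bb) + (z/bb)*Real.exp (lam*bb) := key
    _ = 1 + z * (Real.exp (lam*bb) - 1)/bb := by field_simp; ring

private lemma row_bound {α : Type*} [DecidableEq α] (T : Finset α) (a : α → ℝ) (t : ℕ)
    (w mu cc : ℝ) (hmu : 0 < mu) (hc : 0 < cc)
    (ha0 : ∀ x ∈ T, 0 ≤ a x) (hab : ∀ x ∈ T, a x ≤ mu + cc)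
    (hsum : ∑ x ∈ T, a x ≤ T.card * mu)
    (hT : 0 < T.card)
    (ht : 1 ≤ t)
    (hdelta : 0 < w - t*mu) :
    (((T.powersetCard t).filter (fun S => w ≤ ∑ x ∈ S, a x)).card : ℝ)
      ≤ (T.card.choose t : ℝ)
        * Real.exp (-(3*(w - t*mu)^2/((2*t*mu + w)*(2*cc)))) := by
  set Δ : ℝ := w - t*mu with hΔ
  have htmu : 0 < (t:ℝ)*mu := by
    have : (1:ℝ) ≤ (t:ℝ) := by exact_mod_cast ht
    nlinarith
  have hden : 0 < 3*((t:ℝ)*mu) + Δ := by linarith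
  set lam : ℝ := 3*Δ/(cc*(3*((t:ℝ)*mu) + Δ)) with hlam_def
  have hlam : 0 < lam := by
    apply div_pos (by linarith) (by positivity)
  set b : ℝ := mu + cc with hb_def
  have hb : 0 < b := by positivity
  set v : ℝ := lam * cc with hv_def
  have hv0 : 0 < v := by positivity
  have hveq : v = 3*Δ/(3*((t:ℝ)*mu) + Δ) := by
    rw [hv_def, hlam_def]; field_simp
  have hv3 : v < 3 := by
    rw [hveq]
    rw [div_lt_iff₀ hden]
    linarith
  have step12 : (((T.powersetCard t).filter (fun S => w ≤ ∑ x ∈ S, a x)).card : ℝ)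
      ≤ ∑ S ∈ T.powersetCard t, Real.exp (lam * (∑ x ∈ S, a x - w)) := by
    calc (((T.powersetCard t).filter (fun S => w ≤ ∑ x ∈ S, a x)).card : ℝ)
        = ∑ S ∈ (T.powersetCard t).filter (fun S => w ≤ ∑ x ∈ S, a x), (1:ℝ) := by
          rw [Finset.sum_const, nsmul_eq_mul, mul_one]
      _ ≤ ∑ S ∈ (T.powersetCard t).filter (fun S => w ≤ ∑ x ∈ S, a x),
            Real.exp (lam * (∑ x ∈ S, a x - w)) := by
          apply Finset.sum_le_sum
          intro S hS
          rw [Finset.mem_filter] at hS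
          rw [show (1:ℝ) = Real.exp 0 by simp]
          apply Real.exp_le_exp.mpr
          have := hS.2
          nlinarith
      _ ≤ ∑ S ∈ T.powersetCard t, Real.exp (lam * (∑ x ∈ S, a x - w)) := by
          apply Finset.sum_le_sum_of_subset_of_nonneg (Finset.filter_subset _ _)
          intro S _ _
          exact (Real.exp_pos _).le
  have step3 : ∑ S ∈ T.powersetCard t, Real.exp (lam * (∑ x ∈ S, a x - w))
      = Real.exp (-(lam*w)) * ∑ S ∈ T.powersetCard t, ∏ x ∈ S, Real.exp (lam * a x) := by
    rw [Finset.mul_sum]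
    apply Finset.sum_congr rfl
    intro S _
    rw [← Real.exp_sum, ← Real.exp_add]
    congr 1
    rw [mul_sub, Finset.mul_sum]
    ring
  have hynn : ∀ x ∈ T, 0 ≤ Real.exp (lam * a x) := fun x _ => (Real.exp_pos _).le
  have step4 := maclaurin' T (fun x => Real.exp (lam * a x)) hynn t
  set K : ℝ := Real.exp (lam*mu + mu/cc*(Real.exp (lam*cc) - lam*cc - 1)) with hK_def
  have hcardR : (0:ℝ) < (T.card : ℝ) := by exact_mod_cast hT
  have hE : 0 ≤ (Real.exp (lam*b) - 1)/b := by
    apply div_nonneg _ hb.le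
    have : (1:ℝ) ≤ Real.exp (lam*b) := by
      rw [show (1:ℝ) = Real.exp 0 by simp]
      apply Real.exp_le_exp.mpr
      positivity
    linarith
  have hmean : (∑ x ∈ T, Real.exp (lam * a x)) / (T.card : ℝ) ≤ K := by
    rw [div_le_iff₀ hcardR]
    have h5 : ∑ x ∈ T, Real.exp (lam * a x)
        ≤ ∑ x ∈ T, (1 + a x * ((Real.exp (lam*b) - 1)/b)) := by
      apply Finset.sum_le_sum
      intro x hx
      have := chord_exp (a x) b lam (ha0 x hx) (hab x hx) hb hlam.le
      rw [mul_div_assoc] at this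
      exact this
    have h5b : ∑ x ∈ T, (1 + a x * ((Real.exp (lam*b) - 1)/b))
        = (T.card : ℝ) + (∑ x ∈ T, a x) * ((Real.exp (lam*b) - 1)/b) := by
      rw [Finset.sum_add_distrib, Finset.sum_const, ← Finset.sum_mul, nsmul_eq_mul, mul_one]
    have h5c : (∑ x ∈ T, a x) * ((Real.exp (lam*b) - 1)/b)
        ≤ ((T.card : ℝ) * mu) * ((Real.exp (lam*b) - 1)/b) :=
      mul_le_mul_of_nonneg_right hsum hE
    have h6 : 1 + mu*((Real.exp (lam*b) - 1)/b) ≤ K := by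
      rw [hK_def, hb_def]
      have := mgf_key mu cc lam hmu hc hlam.le
      rw [mul_div_assoc] at this
      exact this
    calc ∑ x ∈ T, Real.exp (lam * a x)
        ≤ (T.card : ℝ) + ((T.card : ℝ) * mu) * ((Real.exp (lam*b) - 1)/b) := by
          rw [h5b] at h5; linarith
      _ = (T.card : ℝ) * (1 + mu*((Real.exp (lam*b) - 1)/b)) := by ring
      _ ≤ (T.card : ℝ) * K := by nlinarith
      _ = K * (T.card : ℝ) := by ring
  have hmean0 : 0 ≤ (∑ x ∈ T, Real.exp (lam * a x)) / (T.card : ℝ) := by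
    apply div_nonneg _ hcardR.le
    apply Finset.sum_nonneg hynn
  have hpow : ((∑ x ∈ T, Real.exp (lam * a x)) / (T.card : ℝ))^t ≤ K^t :=
    pow_le_pow_left₀ hmean0 hmean t
  have hKt : K^t = Real.exp ((t:ℝ) * (lam*mu + mu/cc*(Real.exp (lam*cc) - lam*cc - 1))) := by
    rw [hK_def, ← Real.exp_nat_mul]
  set A : ℝ := (t:ℝ)*mu with hA_def
  have hfinal : -(lam*w) + (t:ℝ) * (lam*mu + mu/cc*(Real.exp (lam*cc) - lam*cc - 1))
      ≤ -(3*Δ^2/((2*(t:ℝ)*mu + w)*(2*cc))) := by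
    have hbern := bern_num v hv0.le hv3
    have h1v : 1 - v/3 = 3*A/(3*A + Δ) := by
      rw [hveq, hA_def]
      field_simp
      ring
    have h1vpos : 0 < 1 - v/3 := by rw [h1v]; positivity
    have hcoef : 0 ≤ (t:ℝ)*(mu/cc) := by positivity
    have hkey : (t:ℝ) * (mu/cc) * (Real.exp v - v - 1) ≤ (t:ℝ)*(mu/cc)*(v^2/(2*(1-v/3))) :=
      mul_le_mul_of_nonneg_left hbern hcoef
    have heqfin : -(lam*w) + (t:ℝ)*(lam*mu) + (t:ℝ)*(mu/cc)*(v^2/(2*(1-v/3)))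
        = -(3*Δ^2/((2*(t:ℝ)*mu + w)*(2*cc))) := by
      have hw : w = Δ + A := by rw [hΔ, hA_def]; ring
      rw [h1v, hveq, hlam_def, hw, hA_def]
      field_simp
      ring
    have hexpand : (t:ℝ) * (lam*mu + mu/cc*(Real.exp (lam*cc) - lam*cc - 1))
        = (t:ℝ)*(lam*mu) + (t:ℝ)*(mu/cc)*(Real.exp v - v - 1) := by
      rw [hv_def]; ring
    rw [hexpand]
    linarith
  calc (((T.powersetCard t).filter (fun S => w ≤ ∑ x ∈ S, a x)).card : ℝ)
      ≤ Real.exp (-(lam*w)) * ∑ S ∈ T.powersetCard t, ∏ x ∈ S, Real.exp (lam * a x) := by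
        rw [← step3]; exact step12
    _ ≤ Real.exp (-(lam*w)) * ((T.card.choose t : ℝ)
          * ((∑ x ∈ T, Real.exp (lam * a x)) / (T.card : ℝ))^t) := by
        apply mul_le_mul_of_nonneg_left _ (Real.exp_pos _).le
        exact step4
    _ ≤ Real.exp (-(lam*w)) * ((T.card.choose t : ℝ) * K^t) := by
        apply mul_le_mul_of_nonneg_left _ (Real.exp_pos _).le
        apply mul_le_mul_of_nonneg_left hpow (Nat.cast_nonneg _)
    _ = (T.card.choose t : ℝ) * Real.exp (-(lam*w)
          + (t:ℝ) * (lam*mu + mu/cc*(Real.exp (lam*cc) - lam*cc - 1))) := by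
        rw [hKt, Real.exp_add]; ring
    _ ≤ (T.card.choose t : ℝ) * Real.exp (-(3*Δ^2/((2*(t:ℝ)*mu + w)*(2*cc)))) := by
        apply mul_le_mul_of_nonneg_left _ (Nat.cast_nonneg _)
        exact Real.exp_le_exp.mpr hfinal

private lemma hdist_le (M w : ℕ) (u v : Fin M → Bool)
    (hu : (Finset.univ.filter (fun j => u j = true)).card = w)
    (hv : (Finset.univ.filter (fun j => v j = true)).card = w) :
    hammingDist u v ≤ 2 * w := by
  have h : hammingDist u v = (Finset.univ.filter (fun j => u j ≠ v j)).card := rfl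
  rw [h]
  have hsub : (Finset.univ.filter (fun j => u j ≠ v j))
      ⊆ (Finset.univ.filter (fun j => u j = true)) ∪ (Finset.univ.filter (fun j => v j = true)) := by
    intro j hj
    rw [Finset.mem_filter] at hj
    rw [Finset.mem_union, Finset.mem_filter, Finset.mem_filter]
    rcases Bool.eq_false_or_eq_true (u j) with h | h
    · exact Or.inl ⟨Finset.mem_univ _, h⟩
    · rcases Bool.eq_false_or_eq_true (v j) with h' | h'
      · exact Or.inr ⟨Finset.mem_univ _, h'⟩
      · exact absurd (h.trans h'.symm) hj.2
  calc (Finset.univ.filter (fun j => u j ≠ v j)).card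
      ≤ ((Finset.univ.filter (fun j => u j = true)) ∪ (Finset.univ.filter (fun j => v j = true))).card :=
        Finset.card_le_card hsub
    _ ≤ (Finset.univ.filter (fun j => u j = true)).card
        + (Finset.univ.filter (fun j => v j = true)).card := Finset.card_union_le _ _
    _ = 2*w := by rw [hu, hv]; ring

end AuxLemmas

/-- core large-deviation count in the proof of the Model 2 theorem: for a
constant-weight code with minimum distance `d` and average distance `D > d`, the number
of pairs `(c, S)` of a codeword `c` and a `t`-subset `S` of the remaining codewords with
`∑_{x∈S}(w − d_H(c,x)/2) ≥ w` is at most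
`N·C(N−1,t)·exp(−3(w − t(w − D/2))²/((2t(w − D/2) + w)(D − d)))`. -/
theorem bad_pair_count (M N d w t : ℕ) (D : ℝ) (c : Fin N → Fin M → Bool)
    (hN : 0 < N)
    (hinj : Function.Injective c)
    (hw : ∀ i, (Finset.univ.filter (fun j => c i j = true)).card = w)
    (hd : ∀ i j, i ≠ j → d ≤ hammingDist (c i) (c j))
    (hD : D = (1 / (N : ℝ)) *
      Finset.univ.inf' (Finset.univ_nonempty_iff.mpr ⟨⟨0, hN⟩⟩)
        (fun i => ∑ j, (hammingDist (c i) (c j) : ℝ)))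
    (ht1 : 1 ≤ t) (ht2 : t < N)
    (hdD : (d : ℝ) < D)
    (hpos : 0 < (w : ℝ) - (t : ℝ) * ((w : ℝ) - D / 2)) :
    ((Finset.univ.filter (fun p : Fin N × Finset (Fin N) =>
        p.1 ∉ p.2 ∧ p.2.card = t ∧
        (w : ℝ) ≤ ∑ x ∈ p.2, ((w : ℝ) - (hammingDist (c p.1) (c x) : ℝ) / 2))).card : ℝ)
      ≤ (N : ℝ) * ((N - 1).choose t : ℝ) *
        Real.exp (-(3 * ((w : ℝ) - (t : ℝ) * ((w : ℝ) - D / 2)) ^ 2 /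
          ((2 * (t : ℝ) * ((w : ℝ) - D / 2) + (w : ℝ)) * (D - (d : ℝ))))) := by
  classical
  have hN2 : 2 ≤ N := by omega
  have hNR : (0:ℝ) < (N:ℝ) := by exact_mod_cast hN
  -- w > 0
  have hwpos : 0 < w := by
    by_contra h
    push_neg at h
    have hw0 : w = 0 := by omega
    have hzero : ∀ i, c i = fun _ => false := by
      intro i
      have h1 : (Finset.univ.filter (fun j => c i j = true)) = ∅ := by
        apply Finset.card_eq_zero.mp
        rw [hw i, hw0]
      funext j
      by_contra hj
      have hj' : c i j = true := by
        cases hcij : c i j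
        · exact absurd hcij hj
        · rfl
      have : j ∈ (Finset.univ.filter (fun j => c i j = true)) :=
        Finset.mem_filter.mpr ⟨Finset.mem_univ _, hj'⟩
      rw [h1] at this
      exact absurd this (Finset.notMem_empty _)
    have h01 : (⟨0, by omega⟩ : Fin N) = ⟨1, by omega⟩ := by
      apply hinj
      rw [hzero ⟨0, by omega⟩, hzero ⟨1, by omega⟩]
    simp [Fin.ext_iff] at h01
  have hwR : (0:ℝ) < (w:ℝ) := by exact_mod_cast hwpos
  -- distance bound 2w
  have hd2w : ∀ i j, (hammingDist (c i) (c j) : ℝ) ≤ 2*(w:ℝ) := by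
    intro i j
    have := hdist_le M w (c i) (c j) (hw i) (hw j)
    exact_mod_cast this
  -- row sums lower-bounded by N*D
  have hND : ∀ i, (N:ℝ)*D ≤ ∑ j, (hammingDist (c i) (c j) : ℝ) := by
    intro i
    have h1 : Finset.univ.inf' (Finset.univ_nonempty_iff.mpr ⟨⟨0, hN⟩⟩)
        (fun i => ∑ j, (hammingDist (c i) (c j) : ℝ))
          ≤ ∑ j, (hammingDist (c i) (c j) : ℝ) :=
      Finset.inf'_le _ (Finset.mem_univ i)
    rw [hD]
    calc (N:ℝ) * ((1/(N:ℝ)) * Finset.univ.inf' (Finset.univ_nonempty_iff.mpr ⟨⟨0, hN⟩⟩)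
          (fun i => ∑ j, (hammingDist (c i) (c j) : ℝ)))
        = Finset.univ.inf' (Finset.univ_nonempty_iff.mpr ⟨⟨0, hN⟩⟩)
          (fun i => ∑ j, (hammingDist (c i) (c j) : ℝ)) := by
          field_simp
      _ ≤ ∑ j, (hammingDist (c i) (c j) : ℝ) := h1
  -- row sums over erase
  have hrow_erase : ∀ i : Fin N, ∑ j ∈ Finset.univ.erase i, (hammingDist (c i) (c j) : ℝ)
      = ∑ j, (hammingDist (c i) (c j) : ℝ) := by
    intro i
    rw [← Finset.add_sum_erase _ _ (Finset.mem_univ i)]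
    rw [hammingDist_self]
    simp
  -- D < 2w hence mu > 0
  have hD2w : D < 2*(w:ℝ) := by
    have i0 : Fin N := ⟨0, hN⟩
    have h1 := hND i0
    have h2 : ∑ j, (hammingDist (c i0) (c j) : ℝ) ≤ ((N:ℝ)-1)*(2*(w:ℝ)) := by
      rw [← hrow_erase i0]
      calc ∑ j ∈ Finset.univ.erase i0, (hammingDist (c i0) (c j) : ℝ)
          ≤ ∑ j ∈ Finset.univ.erase i0, 2*(w:ℝ) := Finset.sum_le_sum (fun j _ => hd2w i0 j)
        _ = ((N:ℝ)-1)*(2*(w:ℝ)) := by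
            rw [Finset.sum_const, Finset.card_erase_of_mem (Finset.mem_univ i0),
              Finset.card_univ, Fintype.card_fin, nsmul_eq_mul]
            have : ((N - 1 : ℕ) : ℝ) = (N:ℝ) - 1 := by
              rw [Nat.cast_sub (by omega)]; simp
            rw [this]
    nlinarith
  set μ : ℝ := (w:ℝ) - D/2 with hμ_def
  set cc : ℝ := (D - (d:ℝ))/2 with hcc_def
  have hccpos : 0 < cc := by rw [hcc_def]; linarith
  have hmupos : 0 < μ := by rw [hμ_def]; linarith
  have hDnn : 0 ≤ D := le_trans (Nat.cast_nonneg d) hdD.le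
  -- the per-row value function
  set a : Fin N → Fin N → ℝ := fun i x => (w:ℝ) - (hammingDist (c i) (c x) : ℝ)/2 with ha_def
  -- fiberwise decomposition
  set P : Fin N × Finset (Fin N) → Prop := fun p =>
    p.1 ∉ p.2 ∧ p.2.card = t ∧
    (w : ℝ) ≤ ∑ x ∈ p.2, ((w : ℝ) - (hammingDist (c p.1) (c x) : ℝ) / 2) with hP_def
  have hfiber : (Finset.univ.filter P).card
      = ∑ i : Fin N, ((Finset.univ.filter P).filter (fun p => p.1 = i)).card :=
    Finset.card_eq_sum_card_fiberwise (fun x _ => Finset.mem_univ x.1)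
  -- per-fiber bound
  have hperfiber : ∀ i : Fin N,
      (((Finset.univ.filter P).filter (fun p => p.1 = i)).card : ℝ)
        ≤ ((N-1).choose t : ℝ)
          * Real.exp (-(3*((w:ℝ) - t*μ)^2/((2*(t:ℝ)*μ + (w:ℝ))*(2*cc)))) := by
    intro i
    set T : Finset (Fin N) := Finset.univ.erase i with hT_def
    have hTcard : T.card = N - 1 := by
      rw [hT_def, Finset.card_erase_of_mem (Finset.mem_univ i), Finset.card_univ,
        Fintype.card_fin]
    -- injection into the row filter
    have hinj2 : (((Finset.univ.filter P).filter (fun p => p.1 = i)).card : ℕ)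
        ≤ ((T.powersetCard t).filter (fun S => (w:ℝ) ≤ ∑ x ∈ S, a i x)).card := by
      apply Finset.card_le_card_of_injOn (fun p => p.2)
      · intro p hp
        rw [Finset.mem_coe, Finset.mem_filter] at hp
        obtain ⟨hp1, hp2⟩ := hp
        rw [Finset.mem_filter, hP_def] at hp1
        obtain ⟨-, hnotmem, hcardt, hsum⟩ := hp1
        rw [Finset.mem_coe, Finset.mem_filter]
        constructor
        · rw [Finset.mem_powersetCard]
          refine ⟨?_, hcardt⟩
          intro x hx
          rw [hT_def, Finset.mem_erase]
          refine ⟨?_, Finset.mem_univ _⟩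
          intro hxi
          rw [hxi] at hx
          rw [hp2] at hnotmem
          exact hnotmem hx
        · rw [← hp2]
          exact hsum
      · intro p hp q hq hpq
        rw [Finset.mem_coe, Finset.mem_filter] at hp hq
        have : p.1 = q.1 := by rw [hp.2, hq.2]
        exact Prod.ext this hpq
    -- apply the row bound
    have ha0 : ∀ x ∈ T, 0 ≤ a i x := by
      intro x _
      have := hd2w i x
      rw [ha_def]
      dsimp only
      linarith
    have hab : ∀ x ∈ T, a i x ≤ μ + cc := by
      intro x hx
      rw [hT_def, Finset.mem_erase] at hx
      have hdix : (d:ℝ) ≤ (hammingDist (c i) (c x) : ℝ) := by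
        exact_mod_cast hd i x (Ne.symm hx.1)
      rw [ha_def, hμ_def, hcc_def]
      dsimp only
      linarith
    have hsum : ∑ x ∈ T, a i x ≤ T.card * μ := by
      have h1 : ∑ x ∈ T, a i x
          = (T.card : ℝ) * (w:ℝ) - (∑ j, (hammingDist (c i) (c j) : ℝ))/2 := by
        rw [ha_def]
        dsimp only
        rw [Finset.sum_sub_distrib, Finset.sum_const, nsmul_eq_mul]
        rw [← hrow_erase i, hT_def]
        rw [← Finset.sum_div]
      rw [h1, hTcard]
      have hcast : ((N - 1 : ℕ) : ℝ) = (N:ℝ) - 1 := by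
        rw [Nat.cast_sub (by omega)]; simp
      rw [hcast]
      have h2 := hND i
      rw [hμ_def]
      nlinarith
    have hTpos : 0 < T.card := by omega
    have := row_bound T (a i) t (w:ℝ) μ cc hmupos hccpos ha0 hab hsum hTpos ht1 hpos
    rw [hTcard] at this
    calc (((Finset.univ.filter P).filter (fun p => p.1 = i)).card : ℝ)
        ≤ (((T.powersetCard t).filter (fun S => (w:ℝ) ≤ ∑ x ∈ S, a i x)).card : ℝ) := by
          exact_mod_cast hinj2
      _ ≤ ((N-1).choose t : ℝ)
          * Real.exp (-(3*((w:ℝ) - t*μ)^2/((2*(t:ℝ)*μ + (w:ℝ))*(2*cc)))) := this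
  -- assemble
  have hcast2 : ((Finset.univ.filter P).card : ℝ)
      = ∑ i : Fin N, (((Finset.univ.filter P).filter (fun p => p.1 = i)).card : ℝ) := by
    rw [hfiber]
    push_cast
    rfl
  calc ((Finset.univ.filter P).card : ℝ)
      = ∑ i : Fin N, (((Finset.univ.filter P).filter (fun p => p.1 = i)).card : ℝ) := hcast2
    _ ≤ ∑ _i : Fin N, ((N-1).choose t : ℝ)
          * Real.exp (-(3*((w:ℝ) - t*μ)^2/((2*(t:ℝ)*μ + (w:ℝ))*(2*cc)))) :=
        Finset.sum_le_sum (fun i _ => hperfiber i)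
    _ = (N:ℝ) * (((N-1).choose t : ℝ)
          * Real.exp (-(3*((w:ℝ) - t*μ)^2/((2*(t:ℝ)*μ + (w:ℝ))*(2*cc))))) := by
        rw [Finset.sum_const, Finset.card_univ, Fintype.card_fin, nsmul_eq_mul]
    _ = (N : ℝ) * ((N - 1).choose t : ℝ) *
        Real.exp (-(3 * ((w : ℝ) - (t : ℝ) * μ) ^ 2 /
          ((2 * (t : ℝ) * μ + (w : ℝ)) * (D - (d : ℝ))))) := by
        rw [show 2*cc = D - (d:ℝ) by rw [hcc_def]; ring]
        ring
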